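/- arXiv:1309.6406 — 3 statements merged into one kernel-verified Lean document; each statement's English description precedes it below -/
import Mathlib

section
/- Let $X$ be a locally compact Hausdorff space. The functor $A \mapsto C_0(X, A)$ on the category of Banach algebras with contractive homomorphisms preserves direct limits: if $A = \varinjlim A_i$ with contractive connecting maps $\varphi_{j,i}$, then $C_0(X, A)$ together with the maps $C_0(X, \varphi_i)$ satisfies the universal property of $\varinjlim C_0(X, A_i)$. -/
open scoped ZeroAtInfty

universe u v

private lemma aux_norm_le {α : Type u} {E : Type v} [TopologicalSpace α]
    [SeminormedAddCommGroup E] (u : C₀(α, E)) {c : ℝ} (hc : 0 ≤ c)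
    (h : ∀ x, ‖u x‖ ≤ c) : ‖u‖ ≤ c := by
  rw [← ZeroAtInftyContinuousMap.norm_toBCF_eq_norm]
  exact (BoundedContinuousFunction.norm_le hc).mpr h

private lemma aux_apply_norm_le {α : Type u} {E : Type v} [TopologicalSpace α]
    [SeminormedAddCommGroup E] (u : C₀(α, E)) (x : α) : ‖u x‖ ≤ ‖u‖ := by
  rw [← ZeroAtInftyContinuousMap.norm_toBCF_eq_norm]
  exact u.toBCF.norm_coe_le_norm x

private lemma dini_key {X : Type u} [TopologicalSpace X]
    {I : Type u} [Preorder I] [IsDirected I (· ≤ ·)] [Nonempty I]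
    {A : I → Type v} [∀ i, NonUnitalNormedRing (A i)] [∀ i, NormedSpace ℂ (A i)]
    {B : Type v} [NonUnitalNormedRing B] [NormedSpace ℂ B]
    (f : ∀ i j, i ≤ j → (A i →ₙₐ[ℂ] A j))
    (hfc : ∀ i j (h : i ≤ j) (a : A i), ‖f i j h a‖ ≤ ‖a‖)
    (φ : ∀ i, A i →ₙₐ[ℂ] B)
    (hφc : ∀ i (a : A i), ‖φ i a‖ ≤ ‖a‖)
    (hφnorm : ∀ i (a : A i),
      Filter.Tendsto (fun j : {j // i ≤ j} => ‖f i j.1 j.2 a‖) Filter.atTop (nhds ‖φ i a‖))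
    (i : I) (b : C₀(X, A i)) {ε : ℝ} (hε : 0 < ε) :
    ∃ j, ∃ h : i ≤ j, ∀ x, ‖f i j h (b x)‖ ≤ ‖φ i (b x)‖ + ε := by
  classical
  haveI hne : Nonempty {j // i ≤ j} := ⟨⟨i, le_rfl⟩⟩
  haveI hdir : IsDirected {j // i ≤ j} (· ≤ ·) := by
    constructor
    rintro ⟨a, ha⟩ ⟨c, hc⟩
    obtain ⟨d, had, hcd⟩ := directed_of (· ≤ ·) a c
    exact ⟨⟨d, ha.trans had⟩, had, hcd⟩
  -- compact set outside of which b is small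
  have hz : Filter.Tendsto b (Filter.cocompact X) (nhds 0) :=
    zero_at_infty b
  have hmem : {x : X | ‖b x‖ < ε} ∈ Filter.cocompact X := by
    have := hz (Metric.ball_mem_nhds (0 : A i) hε)
    have h2 : ⇑b ⁻¹' Metric.ball 0 ε ∈ Filter.cocompact X := this
    refine Filter.mem_of_superset h2 ?_
    intro x hx
    simpa [dist_zero_right] using hx
  obtain ⟨K, hKc, hKsub⟩ := Filter.mem_cocompact.mp hmem
  -- for each x, eventually the norm is close
  have hJ : ∀ x : X, ∃ j₀ : {j // i ≤ j}, ∀ j : {j // i ≤ j}, j₀ ≤ j →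
      ‖f i j.1 j.2 (b x)‖ < ‖φ i (b x)‖ + ε / 4 := by
    intro x
    have hlt : ‖φ i (b x)‖ < ‖φ i (b x)‖ + ε / 4 := by linarith
    have := (hφnorm i (b x)).eventually (eventually_lt_nhds hlt)
    exact Filter.eventually_atTop.mp this
  choose J hJ' using hJ
  -- open cover of K
  set U : X → Set X := fun y => {z : X | ‖b z - b y‖ < ε / 4} with hU
  have hUopen : ∀ y, IsOpen (U y) := by
    intro y
    exact isOpen_lt (((map_continuous b).sub continuous_const).norm) continuous_const
  have hKcover : K ⊆ ⋃ y, U y := by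
    intro z _
    exact Set.mem_iUnion.mpr ⟨z, by simp [hU, hε]⟩
  obtain ⟨T, hT⟩ := hKc.elim_finite_subcover U hUopen hKcover
  obtain ⟨jm, hjm⟩ := (T.image J).exists_le
  refine ⟨jm.1, jm.2, fun x => ?_⟩
  by_cases hx : x ∈ K
  · obtain ⟨y, hyT, hxy⟩ := Set.mem_iUnion₂.mp (hT hx)
    have hxy' : ‖b x - b y‖ < ε / 4 := hxy
    have h1 : ‖f i jm.1 jm.2 (b y)‖ < ‖φ i (b y)‖ + ε / 4 :=
      hJ' y jm (hjm _ (Finset.mem_image_of_mem J hyT))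
    have h2 : ‖f i jm.1 jm.2 (b x) - f i jm.1 jm.2 (b y)‖ ≤ ‖b x - b y‖ := by
      rw [← map_sub]; exact hfc _ _ _ _
    have h3 : ‖φ i (b y) - φ i (b x)‖ ≤ ‖b y - b x‖ := by
      rw [← map_sub]; exact hφc _ _
    have h4 : ‖b y - b x‖ = ‖b x - b y‖ := norm_sub_rev _ _
    have t1 : ‖f i jm.1 jm.2 (b x)‖ ≤ ‖f i jm.1 jm.2 (b y)‖ +
        ‖f i jm.1 jm.2 (b x) - f i jm.1 jm.2 (b y)‖ := norm_le_insert' _ _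
    have t2 : ‖φ i (b y)‖ ≤ ‖φ i (b x)‖ + ‖φ i (b y) - φ i (b x)‖ := norm_le_insert' _ _
    linarith
  · have hxe : ‖b x‖ < ε := hKsub hx
    have : ‖f i jm.1 jm.2 (b x)‖ ≤ ‖b x‖ := hfc _ _ _ _
    have : (0:ℝ) ≤ ‖φ i (b x)‖ := norm_nonneg _
    linarith

private lemma dense_union {X : Type u} [TopologicalSpace X] [LocallyCompactSpace X] [T2Space X]
    {I : Type u} [Preorder I] [IsDirected I (· ≤ ·)] [Nonempty I]
    {A : I → Type v} [∀ i, NonUnitalNormedRing (A i)] [∀ i, NormedSpace ℂ (A i)]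
    {B : Type v} [NonUnitalNormedRing B] [NormedSpace ℂ B]
    (f : ∀ i j, i ≤ j → (A i →ₙₐ[ℂ] A j))
    (φ : ∀ i, A i →ₙₐ[ℂ] B)
    (hφcomp : ∀ i j (h : i ≤ j) (a : A i), φ j (f i j h a) = φ i a)
    (hφdense : Dense (⋃ i, Set.range (φ i)))
    (Φ : ∀ i, C₀(X, A i) →ₙₐ[ℂ] C₀(X, B))
    (hΦ : ∀ i (b : C₀(X, A i)) (x : X), Φ i b x = φ i (b x)) :
    Dense (⋃ i, Set.range (Φ i)) := by
  classical
  rw [Metric.dense_iff]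
  intro g ε hε
  set ε8 : ℝ := ε / 8 with hε8def
  have hε8 : 0 < ε8 := by positivity
  -- compact set outside of which g is small
  have hz : Filter.Tendsto g (Filter.cocompact X) (nhds 0) := zero_at_infty g
  have hmem : {x : X | ‖g x‖ < ε8} ∈ Filter.cocompact X := by
    have h2 : ⇑g ⁻¹' Metric.ball 0 ε8 ∈ Filter.cocompact X :=
      hz (Metric.ball_mem_nhds (0 : B) hε8)
    refine Filter.mem_of_superset h2 ?_
    intro x hx
    simpa [dist_zero_right] using hx
  obtain ⟨t, htc, htsub⟩ := Filter.mem_cocompact.mp hmem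
  -- pointwise approximation
  have happrox : ∀ x : X, ∃ i : I, ∃ a : A i, ‖φ i a - g x‖ < ε8 := by
    intro x
    obtain ⟨u, hu, hdu⟩ := Metric.mem_closure_iff.mp (hφdense (g x)) _ hε8
    obtain ⟨si, hsi⟩ := Set.mem_iUnion.mp hu
    obtain ⟨a, ha⟩ := hsi
    exact ⟨si, a, by rw [ha, ← norm_sub_rev, ← dist_eq_norm]; exact hdu⟩
  choose ix ax hax using happrox
  -- open cover
  set V : X → Set X := fun y => {z : X | ‖φ (ix y) (ax y) - g z‖ < ε8} with hV
  have hVopen : ∀ y, IsOpen (V y) :=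
    fun y => isOpen_lt (Continuous.norm (continuous_const.sub (map_continuous g))) continuous_const
  obtain ⟨T, hT⟩ := htc.elim_finite_subcover V hVopen
    (fun z _ => Set.mem_iUnion.mpr ⟨z, hax z⟩)
  set n := T.card with hn
  set q : Fin n → X := fun k => (T.equivFin.symm k).1 with hq
  set Vf : Fin n → Set X := fun k => V (q k) with hVf
  have hcov : t ⊆ ⋃ k, Vf k := by
    intro z hz'
    obtain ⟨x, hxT, hzx⟩ := Set.mem_iUnion₂.mp (hT hz')
    refine Set.mem_iUnion.mpr ⟨T.equivFin ⟨x, hxT⟩, ?_⟩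
    simpa [hVf, hq, Equiv.symm_apply_apply] using hzx
  obtain ⟨p, hpsub, hpcs⟩ := PartitionOfUnity.exists_isSubordinate_of_locallyFinite_t2space
    htc Vf (fun k => hVopen _) (locallyFinite_of_finite _) hcov
  -- common index
  obtain ⟨i0, hi0⟩ := Finset.exists_le (Finset.univ.image fun k : Fin n => ix (q k))
  have hik : ∀ k : Fin n, ix (q k) ≤ i0 :=
    fun k => hi0 _ (Finset.mem_image_of_mem _ (Finset.mem_univ k))
  set ck : Fin n → B := fun k => φ (ix (q k)) (ax (q k)) with hck
  set ak : ∀ k : Fin n, A i0 := fun k => f (ix (q k)) i0 (hik k) (ax (q k)) with hak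
  have hcka : ∀ k, φ i0 (ak k) = ck k := fun k => hφcomp _ _ _ _
  -- the approximating C₀ function
  have hterm : ∀ k : Fin n,
      Filter.Tendsto (fun x => ((p k x : ℝ) • ak k : A i0)) (Filter.cocompact X) (nhds 0) := by
    intro k
    refine Filter.Tendsto.congr' ?_ tendsto_const_nhds
    have hm : (tsupport (p k))ᶜ ∈ Filter.cocompact X :=
      Filter.mem_cocompact.mpr ⟨tsupport (p k), hpcs k, subset_rfl⟩
    filter_upwards [hm] with x hx
    simp [image_eq_zero_of_notMem_tsupport hx]
  set term : Fin n → C₀(X, A i0) := fun k =>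
    { toFun := fun x => (p k x : ℝ) • ak k
      continuous_toFun := ((p k).continuous).smul continuous_const
      zero_at_infty' := hterm k } with hterm'
  set bb : C₀(X, A i0) := ∑ k : Fin n, term k with hbb
  have hbbapply : ∀ x, bb x = ∑ k : Fin n, (p k x : ℝ) • ak k := by
    intro x
    have := map_sum (AddMonoidHom.mk' (fun u : C₀(X, A i0) => u x) (fun _ _ => rfl)) term
      Finset.univ
    exact this
  -- φ i0 commutes with real smul
  have hsmulR : ∀ (r : ℝ) (a : A i0), φ i0 (r • a) = r • φ i0 a := by
    intro r a
    rw [← Complex.coe_smul r a, map_smul, Complex.coe_smul]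
  have happly : ∀ x, Φ i0 bb x = ∑ k : Fin n, (p k x : ℝ) • ck k := by
    intro x
    rw [hΦ i0 bb x, hbbapply x, map_sum (φ i0)]
    exact Finset.sum_congr rfl fun k _ => by rw [hsmulR, hcka]
  -- the estimate
  have hest : ∀ x, ‖Φ i0 bb x - g x‖ ≤ ε / 4 := by
    intro x
    set s : ℝ := ∑ k : Fin n, p k x with hs
    have hs1 : s ≤ 1 := by
      have := p.sum_le_one x
      rwa [finsum_eq_sum_of_fintype] at this
    have hsnn : 0 ≤ s := Finset.sum_nonneg fun k _ => p.nonneg k x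
    have decomp : Φ i0 bb x - g x
        = (∑ k : Fin n, (p k x : ℝ) • (ck k - g x)) + (s - 1) • g x := by
      rw [happly x]
      simp only [smul_sub, Finset.sum_sub_distrib, ← Finset.sum_smul, sub_smul, one_smul, ← hs]
      abel
    have hterm_le : ∀ k : Fin n, ‖(p k x : ℝ) • (ck k - g x)‖ ≤ p k x * ε8 := by
      intro k
      rw [norm_smul, Real.norm_eq_abs, abs_of_nonneg (p.nonneg k x)]
      by_cases hpk : p k x = 0
      · simp [hpk]
      · have hxk : x ∈ Vf k := hpsub k (subset_tsupport _ (by simpa using hpk))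
        have : ‖ck k - g x‖ < ε8 := hxk
        exact mul_le_mul_of_nonneg_left this.le (p.nonneg k x)
    have h1 : ‖∑ k : Fin n, (p k x : ℝ) • (ck k - g x)‖ ≤ ε8 :=
      calc ‖∑ k : Fin n, (p k x : ℝ) • (ck k - g x)‖
          ≤ ∑ k : Fin n, ‖(p k x : ℝ) • (ck k - g x)‖ := norm_sum_le _ _
        _ ≤ ∑ k : Fin n, p k x * ε8 := Finset.sum_le_sum fun k _ => hterm_le k
        _ = s * ε8 := by rw [← Finset.sum_mul]
        _ ≤ 1 * ε8 := mul_le_mul_of_nonneg_right hs1 hε8.le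
        _ = ε8 := one_mul _
    have h2 : ‖(s - 1) • g x‖ ≤ ε8 := by
      rw [norm_smul, Real.norm_eq_abs, abs_of_nonpos (by linarith), neg_sub]
      by_cases hxt : x ∈ t
      · have : s = 1 := by
          have := p.sum_eq_one hxt
          rwa [finsum_eq_sum_of_fintype] at this
        simp [this, hε8.le]
      · have hg8 : ‖g x‖ < ε8 := htsub hxt
        calc (1 - s) * ‖g x‖ ≤ 1 * ‖g x‖ :=
              mul_le_mul_of_nonneg_right (by linarith) (norm_nonneg _)
          _ = ‖g x‖ := one_mul _
          _ ≤ ε8 := hg8.le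
    calc ‖Φ i0 bb x - g x‖ ≤ ε8 + ε8 := by
          rw [decomp]; exact (norm_add_le _ _).trans (add_le_add h1 h2)
      _ = ε / 4 := by rw [hε8def]; ring
  refine ⟨Φ i0 bb, ?_, Set.mem_iUnion.mpr ⟨i0, ⟨bb, rfl⟩⟩⟩
  rw [Metric.mem_ball, dist_eq_norm]
  have : ‖Φ i0 bb - g‖ ≤ ε / 4 := by
    rw [← ZeroAtInftyContinuousMap.norm_toBCF_eq_norm]
    refine (BoundedContinuousFunction.norm_le (by positivity)).mpr fun x => ?_
    exact hest x
  linarith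
/-- The functor `A ↦ C₀(X, A)` on Banach algebras with contractive homomorphisms
preserves direct limits: if `A = lim A_i` (witnessed by canonical contractive maps
`φ i : A i → A` with dense union of images and the norm formula), then `C₀(X, A)`,
together with the induced maps `C₀(X, φ i) : C₀(X, A i) → C₀(X, A)` (given
pointwise by `b ↦ φ i ∘ b`), satisfies the universal property of the direct limit
of the system `C₀(X, A i)` with the induced connecting maps. -/
theorem c0_functor_preserves_banach_algebra_direct_limit
    {X : Type u} [TopologicalSpace X] [LocallyCompactSpace X] [T2Space X]
    {I : Type u} [Preorder I] [IsDirected I (· ≤ ·)] [Nonempty I]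
    (A : I → Type v) [∀ i, NonUnitalNormedRing (A i)] [∀ i, NormedSpace ℂ (A i)]
    [∀ i, IsScalarTower ℂ (A i) (A i)] [∀ i, SMulCommClass ℂ (A i) (A i)]
    [∀ i, CompleteSpace (A i)]
    {B : Type v} [NonUnitalNormedRing B] [NormedSpace ℂ B]
    [IsScalarTower ℂ B B] [SMulCommClass ℂ B B] [CompleteSpace B]
    -- the direct system and its limit `B = lim A i`
    (f : ∀ i j, i ≤ j → (A i →ₙₐ[ℂ] A j))
    (hfc : ∀ i j (h : i ≤ j) (a : A i), ‖f i j h a‖ ≤ ‖a‖)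
    (φ : ∀ i, A i →ₙₐ[ℂ] B)
    (hφc : ∀ i (a : A i), ‖φ i a‖ ≤ ‖a‖)
    (hφcomp : ∀ i j (h : i ≤ j) (a : A i), φ j (f i j h a) = φ i a)
    (hφdense : Dense (⋃ i, Set.range (φ i)))
    (hφnorm : ∀ i (a : A i),
      Filter.Tendsto (fun j : {j // i ≤ j} => ‖f i j.1 j.2 a‖) Filter.atTop (nhds ‖φ i a‖))
    -- the induced connecting maps `C₀(X, f i j)` and canonical maps `C₀(X, φ i)`
    (F : ∀ i j, i ≤ j → (C₀(X, A i) →ₙₐ[ℂ] C₀(X, A j)))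
    (hF : ∀ i j (h : i ≤ j) (b : C₀(X, A i)) (x : X), F i j h b x = f i j h (b x))
    (Φ : ∀ i, C₀(X, A i) →ₙₐ[ℂ] C₀(X, B))
    (hΦ : ∀ i (b : C₀(X, A i)) (x : X), Φ i b x = φ i (b x)) :
    -- universal property of `lim C₀(X, A i)` for `C₀(X, B)` with the maps `Φ i`
    ∀ (D : Type v) [NonUnitalNormedRing D] [NormedSpace ℂ D]
      [IsScalarTower ℂ D D] [SMulCommClass ℂ D D] [CompleteSpace D]
      (γ : ∀ i, C₀(X, A i) →ₙₐ[ℂ] D),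
      (∀ i (b : C₀(X, A i)), ‖γ i b‖ ≤ ‖b‖) →
      (∀ i j (h : i ≤ j) (b : C₀(X, A i)), γ j (F i j h b) = γ i b) →
      ∃! g : C₀(X, B) →ₙₐ[ℂ] D,
        (∀ b, ‖g b‖ ≤ ‖b‖) ∧ ∀ i (b : C₀(X, A i)), g (Φ i b) = γ i b := by
  classical
  intro D _ _ _ _ _ γ hγc hγcomp
  have hΦF : ∀ i j (h : i ≤ j) (b : C₀(X, A i)), Φ j (F i j h b) = Φ i b := by
    intro i j h b
    apply ZeroAtInftyContinuousMap.ext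
    intro x
    rw [hΦ, hF, hφcomp, hΦ]
  -- the key norm estimate
  have hγΦ : ∀ i (b : C₀(X, A i)), ‖γ i b‖ ≤ ‖Φ i b‖ := by
    intro i b
    refine le_of_forall_pos_le_add ?_
    intro ε hε
    obtain ⟨j, h, hj⟩ := dini_key f hfc φ hφc hφnorm i b hε
    calc ‖γ i b‖ = ‖γ j (F i j h b)‖ := by rw [hγcomp]
      _ ≤ ‖F i j h b‖ := hγc j _
      _ ≤ ‖Φ i b‖ + ε := by
          refine aux_norm_le _ (by positivity) fun x => ?_
          rw [hF]
          refine (hj x).trans ?_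
          have hx : ‖φ i (b x)‖ = ‖Φ i b x‖ := by rw [hΦ]
          rw [hx]
          exact add_le_add (aux_apply_norm_le _ x) le_rfl
  have hlip : ∀ i j (b : C₀(X, A i)) (b' : C₀(X, A j)),
      ‖γ i b - γ j b'‖ ≤ ‖Φ i b - Φ j b'‖ := by
    intro i j b b'
    obtain ⟨k, hik, hjk⟩ := directed_of (· ≤ ·) i j
    calc ‖γ i b - γ j b'‖ = ‖γ k (F i k hik b - F j k hjk b')‖ := by
          rw [map_sub, hγcomp, hγcomp]
      _ ≤ ‖Φ k (F i k hik b - F j k hjk b')‖ := hγΦ k _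
      _ = ‖Φ i b - Φ j b'‖ := by rw [map_sub, hΦF, hΦF]
  set S : Set C₀(X, B) := ⋃ i, Set.range (Φ i) with hS
  have hSdense : Dense S := dense_union f φ hφcomp hφdense Φ hΦ
  have hrep : ∀ s : S, ∃ ib : Σ i, C₀(X, A i), Φ ib.1 ib.2 = (s : C₀(X, B)) := by
    rintro ⟨s, hs⟩
    obtain ⟨i, bi, hbi⟩ := Set.mem_iUnion.mp hs
    exact ⟨⟨i, bi⟩, hbi⟩
  choose rep hrepeq using hrep
  set g₀ : S → D := fun s => γ (rep s).1 (rep s).2 with hg₀def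
  have hg₀ : ∀ (s : S) i (b : C₀(X, A i)), Φ i b = (s : C₀(X, B)) → g₀ s = γ i b := by
    intro s i b hb
    have h := hlip (rep s).1 i (rep s).2 b
    rw [hrepeq s, hb, sub_self, norm_zero] at h
    have h2 : γ (rep s).1 (rep s).2 - γ i b = 0 := norm_le_zero_iff.mp h
    exact sub_eq_zero.mp h2
  have hg₀lip : LipschitzWith 1 g₀ := by
    refine LipschitzWith.of_dist_le_mul fun s t => ?_
    rw [NNReal.coe_one, one_mul, dist_eq_norm, Subtype.dist_eq, dist_eq_norm]
    calc ‖g₀ s - g₀ t‖ = ‖γ (rep s).1 (rep s).2 - γ (rep t).1 (rep t).2‖ := rfl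
      _ ≤ ‖Φ (rep s).1 (rep s).2 - Φ (rep t).1 (rep t).2‖ := hlip _ _ _ _
      _ = ‖(s : C₀(X, B)) - (t : C₀(X, B))‖ := by rw [hrepeq, hrepeq]
  have hUI : IsUniformInducing ((↑) : S → C₀(X, B)) :=
    isUniformEmbedding_subtype_val.isUniformInducing
  have hDR : DenseRange ((↑) : S → C₀(X, B)) := hSdense.denseRange_val
  set g' : C₀(X, B) → D := (hUI.isDenseInducing hDR).extend g₀ with hg'def
  have hg'cont : Continuous g' :=
    (uniformContinuous_uniformly_extend hUI hDR hg₀lip.uniformContinuous).continuous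
  have hg'S : ∀ i (b : C₀(X, A i)), g' (Φ i b) = γ i b := by
    intro i b
    have hmem : Φ i b ∈ S := Set.mem_iUnion.mpr ⟨i, b, rfl⟩
    have he : g' (Φ i b) = g₀ ⟨Φ i b, hmem⟩ :=
      (hUI.isDenseInducing hDR).extend_eq hg₀lip.continuous ⟨Φ i b, hmem⟩
    rw [he, hg₀ _ i b rfl]
  have memS : ∀ u ∈ S, ∃ i, ∃ bi : C₀(X, A i), Φ i bi = u := by
    intro u hu
    obtain ⟨i, bi, hbi⟩ := Set.mem_iUnion.mp hu
    exact ⟨i, bi, hbi⟩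
  have hadd : ∀ u v, g' (u + v) = g' u + g' v := by
    have hfun : (fun w : C₀(X, B) × C₀(X, B) => g' (w.1 + w.2))
        = fun w => g' w.1 + g' w.2 := by
      refine Continuous.ext_on (hSdense.prod hSdense)
        (hg'cont.comp (continuous_fst.add continuous_snd))
        ((hg'cont.comp continuous_fst).add (hg'cont.comp continuous_snd)) ?_
      rintro ⟨u, v⟩ ⟨hu, hv⟩
      obtain ⟨i, bi, hbi⟩ := memS u hu
      obtain ⟨j, bj, hbj⟩ := memS v hv
      obtain ⟨k, hik, hjk⟩ := directed_of (· ≤ ·) i j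
      have h1 : Φ k (F i k hik bi) = u := by rw [hΦF]; exact hbi
      have h2 : Φ k (F j k hjk bj) = v := by rw [hΦF]; exact hbj
      have h3 : Φ k (F i k hik bi + F j k hjk bj) = u + v := by rw [map_add, h1, h2]
      simp only
      rw [← h3, ← h1, ← h2, hg'S, hg'S, hg'S, map_add]
    intro u v
    exact congrFun hfun (u, v)
  have hmul : ∀ u v, g' (u * v) = g' u * g' v := by
    have hfun : (fun w : C₀(X, B) × C₀(X, B) => g' (w.1 * w.2))
        = fun w => g' w.1 * g' w.2 := by
      refine Continuous.ext_on (hSdense.prod hSdense)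
        (hg'cont.comp (continuous_fst.mul continuous_snd))
        ((hg'cont.comp continuous_fst).mul (hg'cont.comp continuous_snd)) ?_
      rintro ⟨u, v⟩ ⟨hu, hv⟩
      obtain ⟨i, bi, hbi⟩ := memS u hu
      obtain ⟨j, bj, hbj⟩ := memS v hv
      obtain ⟨k, hik, hjk⟩ := directed_of (· ≤ ·) i j
      have h1 : Φ k (F i k hik bi) = u := by rw [hΦF]; exact hbi
      have h2 : Φ k (F j k hjk bj) = v := by rw [hΦF]; exact hbj
      have h3 : Φ k (F i k hik bi * F j k hjk bj) = u * v := by rw [map_mul, h1, h2]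
      simp only
      rw [← h3, ← h1, ← h2, hg'S, hg'S, hg'S, map_mul]
    intro u v
    exact congrFun hfun (u, v)
  have hadd' : ∀ u v, g' (u + v) = g' u + g' v := hadd
  have hsmul : ∀ (c : ℂ) (u : C₀(X, B)), g' (c • u) = c • g' u := by
    intro c
    have hfun : (fun u : C₀(X, B) => g' (c • u)) = fun u => c • g' u := by
      refine Continuous.ext_on hSdense (hg'cont.comp (continuous_const_smul c))
        (hg'cont.const_smul c) ?_
      intro u hu
      obtain ⟨i, bi, hbi⟩ := memS u hu
      simp only
      rw [← hbi, ← map_smul (Φ i), hg'S, hg'S, map_smul]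
    intro u
    exact congrFun hfun u
  have hzero : g' 0 = 0 := by
    obtain ⟨i⟩ := (inferInstance : Nonempty I)
    have h0 : Φ i 0 = 0 := map_zero _
    rw [← h0, hg'S, map_zero]
  have hbound : ∀ u, ‖g' u‖ ≤ ‖u‖ := by
    have hclosed : IsClosed {u : C₀(X, B) | ‖g' u‖ ≤ ‖u‖} :=
      isClosed_le hg'cont.norm continuous_norm
    have hsub : S ⊆ {u : C₀(X, B) | ‖g' u‖ ≤ ‖u‖} := by
      intro u hu
      obtain ⟨i, bi, hbi⟩ := memS u hu
      rw [← hbi]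
      show ‖g' (Φ i bi)‖ ≤ ‖Φ i bi‖
      rw [hg'S]
      exact hγΦ i bi
    have hcl := hclosed.closure_subset_iff.mpr hsub
    rw [hSdense.closure_eq] at hcl
    intro u
    exact hcl (Set.mem_univ u)
  refine ⟨{ toFun := g', map_smul' := hsmul, map_zero' := hzero,
            map_add' := fun u v => hadd u v, map_mul' := hmul }, ⟨hbound, hg'S⟩, ?_⟩
  rintro g₂ ⟨hg₂b, hg₂S⟩
  have hg₂cont : Continuous g₂ :=
    AddMonoidHomClass.continuous_of_bound g₂ 1 (fun u => by simpa using hg₂b u)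
  have hfeq : ⇑g₂ = g' := by
    refine Continuous.ext_on hSdense hg₂cont hg'cont ?_
    intro u hu
    obtain ⟨i, bi, hbi⟩ := memS u hu
    rw [← hbi]
    show g₂ (Φ i bi) = g' (Φ i bi)
    rw [hg₂S, hg'S]
  exact DFunLike.ext _ _ fun u => congrFun hfeq u
end

section
/- Let $G$ be a discrete group acting freely on a compact Hausdorff space $X$, and let $g \in G \setminus \{1\}$. Then for every $x \in X$ there exist an open neighborhood $U$ of $x$ and continuous functions $s_1, s_2 : X \to S^1$ (circle-valued) such that $\frac{1}{2}\left(s_1(y)\overline{s_1(g^{-1}y)} + s_2(y)\overline{s_2(g^{-1}y)}\right) = 0$ for all $y \in U$. -/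
open Pointwise


/-- Let a discrete group `G` act freely and continuously on a compact Hausdorff
space `X`, and let `g ∈ G` with `g ≠ 1`. Then every `x ∈ X` has an open
neighborhood `U` and there are continuous circle-valued functions `s₁, s₂ : X → S¹`
such that `(1/2)(s₁(y)·conj(s₁(g⁻¹y)) + s₂(y)·conj(s₂(g⁻¹y))) = 0` for all `y ∈ U`. -/
theorem free_action_local_two_function_cancellation
    {G X : Type*} [Group G] [TopologicalSpace X] [CompactSpace X] [T2Space X]
    [MulAction G X] [ContinuousConstSMul G X]
    (hfree : ∀ (g : G) (x : X), g • x = x → g = 1)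
    (g : G) (hg : g ≠ 1) (x : X) :
    ∃ U : Set X, IsOpen U ∧ x ∈ U ∧
      ∃ s₁ s₂ : C(X, ℂ),
        (∀ y, ‖s₁ y‖ = 1) ∧ (∀ y, ‖s₂ y‖ = 1) ∧
        ∀ y ∈ U,
          (1 / 2 : ℂ) * (s₁ y * (starRingEnd ℂ) (s₁ (g⁻¹ • y)) +
            s₂ y * (starRingEnd ℂ) (s₂ (g⁻¹ • y))) = 0 := by
  have hne : x ≠ g⁻¹ • x := by
    intro h
    exact hg (by simpa using (hfree g⁻¹ x h.symm))
  obtain ⟨A, hxA, hA, B, hxB, hB, hAB⟩ := exists_open_nhds_disjoint_closure hne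
  -- The neighborhood
  refine ⟨A ∩ (g • B), (hA.inter (hB.smul g)), ⟨hxA, ⟨g⁻¹ • x, hxB, by simp⟩⟩, ?_⟩
  -- Urysohn function
  obtain ⟨r, hr0, hr1, hr01⟩ := exists_continuous_zero_one_of_isClosed
    isClosed_closure isClosed_closure hAB
  refine ⟨ContinuousMap.const X 1,
    ⟨fun y => Complex.exp (Real.pi * Complex.I * (r y : ℂ)), by fun_prop⟩, ?_, ?_, ?_⟩
  · simp
  · intro y
    simp only [ContinuousMap.coe_mk]
    rw [Complex.norm_exp]
    norm_num [mul_comm, Complex.mul_re]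
  · rintro y ⟨hyA, hyB⟩
    have hy1 : r y = 0 := hr0 (subset_closure hyA)
    have hy2 : r (g⁻¹ • y) = 1 := by
      apply hr1
      apply subset_closure
      obtain ⟨b, hb, rfl⟩ := hyB
      simpa using hb
    simp only [ContinuousMap.const_apply, ContinuousMap.coe_mk, hy1, hy2]
    simp [Complex.exp_pi_mul_I]
end

section
/- Let $G$ be a discrete group acting freely on a compact Hausdorff space $X$, and let $F \subseteq G \setminus \{1\}$ be finite. Then there exist $n \in \mathbb{Z}_{>0}$ and continuous functions $s_1, \ldots, s_n : X \to \mathbb{C}$ with $|s_k(x)| = 1$ for all $k$ and all $x \in X$, such that for all $x \in X$ and all $g \in F$, $\frac{1}{n}\sum_{k=1}^n s_k(x)\overline{s_k(g^{-1}x)} = 0$. -/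
open Set Pointwise

set_option linter.unusedSectionVars false

section Aux

variable {G X : Type*} [Group G] [TopologicalSpace X] [CompactSpace X] [T2Space X]
  [MulAction G X] [ContinuousConstSMul G X]

/-- Auxiliary predicate: `F` is handled on `U`. -/
def FAUHandled (U : Set X) (F : Finset G) : Prop :=
  ∃ n : ℕ, 0 < n ∧ ∃ s : Fin n → C(X, ℂ),
    (∀ k y, ‖s k y‖ = 1) ∧
    ∀ x ∈ U, ∀ g ∈ F, ∑ k, s k x * (starRingEnd ℂ) (s k (g⁻¹ • x)) = 0

lemma fau_of_family {U : Set X} {F : Finset G} {ι : Type} [Fintype ι] [Nonempty ι]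
    (s : ι → C(X, ℂ)) (h1 : ∀ k y, ‖s k y‖ = 1)
    (h2 : ∀ x ∈ U, ∀ g ∈ F, ∑ k, s k x * (starRingEnd ℂ) (s k (g⁻¹ • x)) = 0) :
    FAUHandled U F := by
  refine ⟨Fintype.card ι, Fintype.card_pos, s ∘ (Fintype.equivFin ι).symm,
    fun k y => h1 _ y, fun x hx g hg => ?_⟩
  rw [← h2 x hx g hg]
  exact Fintype.sum_equiv (Fintype.equivFin ι).symm _ _ (fun k => rfl)

lemma fau_trivial {U : Set X} {F : Finset G}
    (h : ∀ x ∈ U, ∀ g ∈ F, False) : FAUHandled U F := by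
  refine ⟨1, one_pos, fun _ => 1, fun k y => by simp, fun x hx g hg => (h x hx g hg).elim⟩

lemma fau_pair {U V : Set X} {F F' : Finset G}
    (hU : FAUHandled U F) (hV : FAUHandled V F') {W : Set X} {P : Finset G}
    (h : ∀ x ∈ W, ∀ g ∈ P, (x ∈ U ∧ g ∈ F) ∨ (x ∈ V ∧ g ∈ F')) :
    FAUHandled W P := by
  obtain ⟨n, hn, s, hs1, hs2⟩ := hU
  obtain ⟨m, hm, t, ht1, ht2⟩ := hV
  have : Nonempty (Fin n × Fin m) := ⟨(⟨0, hn⟩, ⟨0, hm⟩)⟩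
  refine fau_of_family (fun p : Fin n × Fin m => s p.1 * t p.2) ?_ ?_
  · intro k y
    simp [ContinuousMap.mul_apply, norm_mul, hs1, ht1]
  · intro x hx g hg
    have key : ∀ y : X,
        (∑ p : Fin n × Fin m, (s p.1 * t p.2) x * (starRingEnd ℂ) ((s p.1 * t p.2) y))
        = (∑ i, s i x * (starRingEnd ℂ) (s i y)) * (∑ j, t j x * (starRingEnd ℂ) (t j y)) := by
      intro y
      rw [Finset.sum_mul_sum, Fintype.sum_prod_type]
      refine Finset.sum_congr rfl fun i _ => Finset.sum_congr rfl fun j _ => ?_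
      simp only [ContinuousMap.mul_apply, map_mul]
      ring
    rcases h x hx g hg with ⟨hxU, hgF⟩ | ⟨hxV, hgF'⟩
    · rw [key, hs2 x hxU g hgF, zero_mul]
    · rw [key, ht2 x hxV g hgF', mul_zero]

lemma fau_local (a : G) (ha : a ≠ 1)
    (hfree : ∀ (g : G) (x : X), g • x = x → g = 1) (x : X) :
    ∃ U : Set X, IsOpen U ∧ x ∈ U ∧ FAUHandled U {a} := by
  have hxy : a⁻¹ • x ≠ x := fun h => ha (inv_eq_one.mp (hfree a⁻¹ x h))
  obtain ⟨W0, V0, hW0, hV0, hyW0, hxV0, hd⟩ := t2_separation hxy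
  obtain ⟨Cx, hCxm, hCxc, hCxs⟩ := exists_mem_nhds_isClosed_subset (hV0.mem_nhds hxV0)
  obtain ⟨Cy, hCym, hCyc, hCys⟩ := exists_mem_nhds_isClosed_subset (hW0.mem_nhds hyW0)
  set V := interior Cx with hVdef
  set W := interior Cy with hWdef
  set U := V ∩ a • W with hUdef
  have hxU : x ∈ U := ⟨mem_interior_iff_mem_nhds.2 hCxm,
    Set.mem_smul_set_iff_inv_smul_mem.2 (mem_interior_iff_mem_nhds.2 hCym)⟩
  have hUopen : IsOpen U := (isOpen_interior).inter ((isOpen_interior).smul a)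
  -- closures
  have hclA : closure U ⊆ V0 := by
    refine (closure_mono inter_subset_left).trans ?_
    exact (closure_minimal interior_subset hCxc).trans hCxs
  have hclB : a⁻¹ • closure U ⊆ W0 := by
    have h1 : closure U ⊆ a • closure W := by
      refine (closure_mono inter_subset_right).trans ?_
      rw [closure_smul]
    have h2 : a⁻¹ • closure U ⊆ closure W := by
      calc a⁻¹ • closure U ⊆ a⁻¹ • (a • closure W) := Set.smul_set_mono h1
        _ = closure W := inv_smul_smul a (closure W)
    exact h2.trans (((closure_minimal interior_subset hCyc)).trans hCys)
  have hdisj : Disjoint (a⁻¹ • closure U) (closure U) :=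
    (hd.mono hclB hclA)
  obtain ⟨f, hf0, hf1, _⟩ := exists_continuous_zero_one_of_isClosed
    ((isClosed_closure).smul a⁻¹) isClosed_closure hdisj
  -- the two functions
  set σ : C(X, ℂ) := ⟨fun y => Complex.exp ((Real.pi * f y : ℝ) * Complex.I), by
    fun_prop⟩ with hσdef
  have hσnorm : ∀ y, ‖σ y‖ = 1 := by
    intro y
    rw [show σ y = Complex.exp ((Real.pi * f y : ℝ) * Complex.I) from rfl,
      Complex.norm_exp_ofReal_mul_I]
  refine ⟨U, hUopen, hxU, ?_⟩
  have : Nonempty (Fin 2) := ⟨0⟩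
  refine fau_of_family (![1, σ]) ?_ ?_
  · intro k y
    fin_cases k
    · simp
    · simpa using hσnorm y
  · intro x' hx' g hg
    rw [Finset.mem_singleton] at hg
    subst hg
    have hA : σ x' = -1 := by
      have h1 : f x' = 1 := hf1 (subset_closure hx')
      simp only [hσdef, ContinuousMap.coe_mk, h1, mul_one]
      exact_mod_cast Complex.exp_pi_mul_I
    have hB : σ (g⁻¹ • x') = 1 := by
      have h0 : f (g⁻¹ • x') = 0 :=
        hf0 (Set.smul_mem_smul_set (subset_closure hx'))
      simp [hσdef, h0]
    rw [Fin.sum_univ_two]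
    simp [hA, hB]

lemma fau_nhds (hfree : ∀ (g : G) (x : X), g • x = x → g = 1) (x : X) :
    ∀ F : Finset G, (1 : G) ∉ F → ∃ U : Set X, IsOpen U ∧ x ∈ U ∧ FAUHandled U F := by
  intro F
  classical
  induction F using Finset.induction with
  | empty =>
    exact fun _ => ⟨univ, isOpen_univ, mem_univ x,
      fau_trivial (fun _ _ g hg => by simp at hg)⟩
  | @insert a F ha ih =>
    intro hF
    have ha1 : a ≠ 1 := by rintro rfl; exact hF (Finset.mem_insert_self 1 F)
    have hF1 : (1 : G) ∉ F := fun h => hF (Finset.mem_insert_of_mem h)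
    obtain ⟨U1, hU1o, hU1x, hU1⟩ := fau_local a ha1 hfree x
    obtain ⟨U2, hU2o, hU2x, hU2⟩ := ih hF1
    refine ⟨U1 ∩ U2, hU1o.inter hU2o, ⟨hU1x, hU2x⟩, fau_pair hU1 hU2 ?_⟩
    intro x' hx' g hg
    rcases Finset.mem_insert.1 hg with rfl | hgF
    · exact Or.inl ⟨hx'.1, Finset.mem_singleton_self g⟩
    · exact Or.inr ⟨hx'.2, hgF⟩

end Aux

/-- Let a discrete group `G` act freely and continuously on a compact Hausdorff
space `X`, and let `F ⊆ G \ {1}` be finite. Then there exist `n > 0` and continuous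
functions `s₁, …, sₙ : X → ℂ` of constant modulus one such that
`(1/n) ∑_k s_k(x)·conj(s_k(g⁻¹x)) = 0` for all `x ∈ X` and all `g ∈ F`. -/
theorem free_action_unimodular_function_cancellation
    {G X : Type*} [Group G] [TopologicalSpace X] [CompactSpace X] [T2Space X]
    [MulAction G X] [ContinuousConstSMul G X]
    (hfree : ∀ (g : G) (x : X), g • x = x → g = 1)
    (F : Finset G) (hF : (1 : G) ∉ F) :
    ∃ n : ℕ, 0 < n ∧ ∃ s : Fin n → C(X, ℂ),
      (∀ k y, ‖s k y‖ = 1) ∧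
      ∀ (x : X), ∀ g ∈ F,
        (n : ℂ)⁻¹ * ∑ k, s k x * (starRingEnd ℂ) (s k (g⁻¹ • x)) = 0 := by
  choose U hUo hUx hU using fun x : X => fau_nhds hfree x F hF
  obtain ⟨t, ht⟩ := isCompact_univ.elim_finite_subcover U hUo
    (fun x _ => Set.mem_iUnion.2 ⟨x, hUx x⟩)
  have hbig : ∀ t : Finset X, FAUHandled (⋃ x ∈ t, U x) F := by
    classical
    intro t
    induction t using Finset.induction with
    | empty => exact fau_trivial (fun x hx => by simp at hx)
    | @insert a s ha ih =>
      rw [Finset.set_biUnion_insert]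
      refine fau_pair (hU a) ih ?_
      intro x hx g hg
      rcases hx with hx | hx
      · exact Or.inl ⟨hx, hg⟩
      · exact Or.inr ⟨hx, hg⟩
  obtain ⟨n, hn, s, h1, h2⟩ := hbig t
  exact ⟨n, hn, s, h1, fun x g hg => by
    rw [h2 x (ht (Set.mem_univ x)) g hg, mul_zero]⟩
end
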